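/- arXiv:1308.4060 — 11 statements merged into one kernel-verified Lean document; each statement's English description precedes it below -/
import Mathlib

section
/- Let n, n′, k, ℓ_μ, ℓ_id be natural numbers with n ≥ 2, ℓ_μ ≥ 1, satisfying the heteromorphism arity equations k = ℓ_μ + ℓ_id and k·n′ = n·ℓ_μ + ℓ_id. Then 2 ≤ n′ ≤ n; moreover n′ = n if and only if ℓ_id = 0. In particular, a heteromorphism always decreases (never increases) the arity of the polyadic multiplication. -/
/-- For a `k`-place heteromorphism with `ℓμ` multiplications and `ℓid` intact
elements, the arity equations force `2 ≤ n' ≤ n`, with `n' = n` iff `ℓid = 0`: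
a heteromorphism always decreases (never increases) the arity. -/
theorem heteromorphism_decreases_arity (n n' k lmu lid : ℕ)
    (hn : 2 ≤ n) (hlmu : 1 ≤ lmu)
    (hplaces : k = lmu + lid) (harity : k * n' = n * lmu + lid) :
    2 ≤ n' ∧ n' ≤ n ∧ (n' = n ↔ lid = 0) := by
  subst hplaces
  refine ⟨?_, ?_, ?_, ?_⟩
  · by_contra h
    push_neg at h
    interval_cases n' <;> nlinarith
  · by_contra h
    push_neg at h
    nlinarith
  · intro h; subst h; nlinarith
  · intro h; subst h; simp at harity; exact Nat.eq_of_mul_eq_mul_left hlmu (by linarith)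
end

section
/- Let n, n′, k, ℓ_μ, ℓ_id be natural numbers with n ≥ 2, ℓ_μ ≥ 1, satisfying k = ℓ_μ + ℓ_id and k·n′ = n·ℓ_μ + ℓ_id. Then the arity changing formulas hold: k·(n′ − 1) = (n − 1)·ℓ_μ and ℓ_id·(n′ − 1) = (n − n′)·ℓ_μ; consequently ℓ_μ ≤ k ≤ (n − 1)·ℓ_μ, with k = ℓ_μ exactly when n′ = n (multiplace homomorphism) and k = (n − 1)·ℓ_μ exactly when n′ = 2 (binarizing heteromorphism). -/
set_option maxHeartbeats 1600000 in
/-- The arity changing formulas for heteromorphisms: `k (n'-1) = (n-1) ℓμ` and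
`ℓid (n'-1) = (n-n') ℓμ`; consequently `ℓμ ≤ k ≤ (n-1) ℓμ`, with `k = ℓμ`
exactly for multiplace homomorphisms (`n' = n`) and `k = (n-1) ℓμ` exactly for
binarizing heteromorphisms (`n' = 2`). -/
theorem arity_changing_formulas (n n' k lmu lid : ℕ)
    (hn : 2 ≤ n) (hlmu : 1 ≤ lmu)
    (hplaces : k = lmu + lid) (harity : k * n' = n * lmu + lid) :
    k * (n' - 1) = (n - 1) * lmu ∧
    lid * (n' - 1) = (n - n') * lmu ∧
    lmu ≤ k ∧ k ≤ (n - 1) * lmu ∧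
    (k = lmu ↔ n' = n) ∧
    (k = (n - 1) * lmu ↔ n' = 2) := by
  subst hplaces
  have hn'2 : 2 ≤ n' := by
    rcases n' with _ | _ | m
    · nlinarith
    · nlinarith
    · omega
  obtain ⟨m, rfl⟩ := Nat.exists_eq_add_of_le hn'2
  obtain ⟨p, rfl⟩ := Nat.exists_eq_add_of_le hn
  have hc : lid + lmu * m + lid * m = p * lmu := by nlinarith
  have hmp : m ≤ p := by nlinarith
  obtain ⟨q, rfl⟩ := Nat.exists_eq_add_of_le hmp
  have h1 : 2 + m - 1 = m + 1 := by omega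
  have h2 : 2 + (m + q) - 1 = m + q + 1 := by omega
  have h3 : 2 + (m + q) - (2 + m) = q := by omega
  have hc2 : lid + lid * m = q * lmu := by nlinarith
  rw [h1, h2, h3]
  refine ⟨by nlinarith, by nlinarith, by omega, by nlinarith, ?_, ?_⟩
  · constructor
    · intro h
      have hlid : lid = 0 := by omega
      rw [hlid] at hc2
      have h0 : q * lmu = 0 := by linarith
      have hq : q = 0 := by
        rcases Nat.mul_eq_zero.mp h0 with h' | h'
        · exact h'
        · omega
      omega
    · intro h
      have hq : q = 0 := by omega
      rw [hq] at hc2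
      have h0 : lid + lid * m = 0 := by linarith
      obtain ⟨hl, -⟩ := Nat.add_eq_zero.mp h0
      omega
  · have hexp : (m + q + 1) * lmu = m * lmu + q * lmu + lmu := by ring
    constructor
    · intro h
      have hm0 : m * lmu + lid * m = 0 := by
        have : lmu + lid = m * lmu + q * lmu + lmu := by rw [h, hexp]
        linarith [hc2, this]
      obtain ⟨hml, -⟩ := Nat.add_eq_zero.mp hm0
      rcases Nat.mul_eq_zero.mp hml with h' | h' <;> omega
    · intro h
      have hm : m = 0 := by omega
      rw [hm] at hc2 ⊢
      have h4 : lid = q * lmu := by linarith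
      have h5 : (0 + q + 1) * lmu = q * lmu + lmu := by ring
      linarith
end

section
/- Let n ≥ 2 and let μ : G^n → G be a totally associative n-ary operation on a set G. Define a binary operation ∗ on the set G^{n−1} of (n−1)-tuples by x ∗ y = (μ[x₁, …, x_{n−1}, y₁], y₂, …, y_{n−1}). Then ∗ is associative, so ⟨G^{n−1}, ∗⟩ is a semigroup; thus any n-ary semigroup can be mapped into a binary semigroup by the binarizing heteromorphism with k = n − 1 places, ℓ_μ = 1 multiplication and ℓ_id = n − 2 intact elements (the identity map on G^{n−1}). -/
/-- Composition of an `n`-ary operation `μ` with itself: in the outer product,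
the inner multiplication `μ` is placed at position `i` (0-indexed), acting on
entries `i, …, i+n-1` of the `(2n-1)`-tuple `t`. -/
def polyComp {G : Type*} (n : ℕ) (μ : (Fin n → G) → G) (i : ℕ) (t : ℕ → G) : G :=
  μ (fun j => if j.val < i then t j.val
      else if j.val = i then μ (fun l => t (i + l.val))
      else t (j.val + n - 1))

/-- The binary operation on `(n-1)`-tuples given by the binarizing
heteromorphism: `x ∗ y = (μ[x₁, …, x_{n-1}, y₁], y₂, …, y_{n-1})`. -/
def binOp {G : Type*} (n : ℕ) (μ : (Fin n → G) → G)
    (x y : Fin (n - 1) → G) : Fin (n - 1) → G :=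
  fun j =>
    if j.val = 0 then
      μ (fun l => if hl : l.val < n - 1 then x ⟨l.val, hl⟩
          else y ⟨0, Nat.lt_of_le_of_lt (Nat.zero_le _) j.isLt⟩)
    else y j

/-- Any `n`-ary semigroup (totally associative `n`-ary operation) can be mapped
into a binary semigroup: the binarizing operation `∗` on `(n-1)`-tuples, with
`k = n-1` places, one multiplication and `n-2` intact elements, is associative. -/
theorem binarizing_heteromorphism_semigroup {G : Type*} (n : ℕ) (hn : 2 ≤ n)
    (μ : (Fin n → G) → G)
    (hassoc : ∀ i j : ℕ, i ≤ n - 1 → j ≤ n - 1 → ∀ t : ℕ → G,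
      polyComp n μ i t = polyComp n μ j t) :
    ∀ x y z : Fin (n - 1) → G,
      binOp n μ (binOp n μ x y) z = binOp n μ x (binOp n μ y z) := by
  intro x y z
  have hn1 : 0 < n - 1 := by omega
  funext j
  by_cases hj : j.val = 0
  · -- glue the three tuples into one (2n-1)-tuple
    set t : ℕ → G := fun k =>
      if h : k < n - 1 then x ⟨k, h⟩
      else if h2 : k - (n - 1) < n - 1 then y ⟨k - (n - 1), h2⟩
      else z ⟨0, hn1⟩ with ht
    have key := hassoc 0 (n - 1) (Nat.zero_le _) (le_refl _) t
    have hL : binOp n μ (binOp n μ x y) z j = polyComp n μ 0 t := by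
      simp only [binOp, hj, if_true, polyComp]
      congr 1
      funext l
      rcases lt_trichotomy l.val (n - 1) with h | h | h
      · rw [dif_pos h]
        rw [if_neg (Nat.not_lt_zero _)]
        by_cases h0 : l.val = 0
        · rw [if_pos h0, if_pos h0]
          congr 1
          funext m
          simp only [ht, Nat.zero_add]
          rcases Nat.lt_or_ge m.val (n - 1) with hm | hm
          · rw [dif_pos hm, dif_pos hm]
          · have hm1 : m.val = n - 1 := by omega
            rw [dif_neg (by omega), dif_neg (by omega),
              dif_pos (show m.val - (n-1) < n - 1 by omega)]
            congr 1
            exact Fin.ext (by first | omega | (simp; omega) | simp)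
        · rw [if_neg h0, if_neg h0]
          simp only [ht]
          rw [dif_neg (show ¬ (l.val + n - 1 < n - 1) by omega),
            dif_pos (show l.val + n - 1 - (n - 1) < n - 1 by omega)]
          congr 1
          exact Fin.ext (by first | omega | (simp; omega) | simp)
      · have h0 : l.val ≠ 0 := by omega
        rw [dif_neg (by omega), if_neg (Nat.not_lt_zero _), if_neg h0]
        simp only [ht]
        rw [dif_neg (show ¬ (l.val + n - 1 < n - 1) by omega),
          dif_neg (show ¬ (l.val + n - 1 - (n - 1) < n - 1) by omega)]
      · omega
    have hR : binOp n μ x (binOp n μ y z) j = polyComp n μ (n - 1) t := by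
      simp only [binOp, hj, if_true, polyComp]
      congr 1
      funext l
      rcases lt_trichotomy l.val (n - 1) with h | h | h
      · rw [dif_pos h, if_pos h]
        simp only [ht]
        rw [dif_pos h]
      · rw [dif_neg (by omega), if_neg (by omega), if_pos h]
        congr 1
        funext m
        simp only [ht]
        rw [dif_neg (show ¬ (n - 1 + m.val < n - 1) by omega)]
        rcases Nat.lt_or_ge m.val (n - 1) with hm | hm
        · rw [dif_pos (show n - 1 + m.val - (n - 1) < n - 1 by omega), dif_pos hm]
          congr 1
          exact Fin.ext (by first | omega | (simp; omega) | simp)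
        · rw [dif_neg (show ¬ (n - 1 + m.val - (n - 1) < n - 1) by omega),
            dif_neg (by omega)]
      · omega
    rw [hL, key, ← hR]
  · simp [binOp, hj]
end

section
/- Let μ : G³ → G be a totally associative ternary operation, written [abc]. Define a ternary operation μ′ on G × G by the Post-like associative quiver: μ′((g₁,h₁),(g₂,h₂),(g₃,h₃)) = ([g₁h₂g₃], [h₁g₂h₃]). Then μ′ is totally associative, i.e. ⟨G × G, μ′⟩ is a ternary semigroup (the diagonal ternary semigroup construction). -/
/-- The ternary operation on `G × G` given by the Post-like associative quiver:
`μ′((g₁,h₁),(g₂,h₂),(g₃,h₃)) = ([g₁h₂g₃], [h₁g₂h₃])`. -/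
def postProd {G : Type*} (m : G → G → G → G) :
    G × G → G × G → G × G → G × G :=
  fun p q r => (m p.1 q.2 r.1, m p.2 q.1 r.2)

/-- If `[abc]` is a totally associative ternary operation on `G`, then the
Post-like quiver operation `μ′` on `G × G` is totally associative, i.e.
`⟨G × G, μ′⟩` is a ternary semigroup (the diagonal ternary semigroup). -/
theorem postProd_totally_associative {G : Type*} (m : G → G → G → G)
    (hassoc : ∀ a b c d e : G,
      m (m a b c) d e = m a (m b c d) e ∧ m a (m b c d) e = m a b (m c d e)) :
    ∀ p q r s t : G × G,
      postProd m (postProd m p q r) s t = postProd m p (postProd m q r s) t ∧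
      postProd m p (postProd m q r s) t = postProd m p q (postProd m r s t) := by
  intro p q r s t
  simp only [postProd, Prod.mk.injEq]
  refine ⟨⟨?_, ?_⟩, ?_, ?_⟩ <;>
    first
      | exact (hassoc _ _ _ _ _).1
      | exact (hassoc _ _ _ _ _).2
end

section
/- Let [abc] be a totally associative ternary operation on G which is semicommutative, i.e. [g t h] = [h t g] for all g, t, h ∈ G. Then the operation is medial: for every 3×3 matrix of elements g_{ij} ∈ G, [[g₁₁g₁₂g₁₃][g₂₁g₂₂g₂₃][g₃₁g₃₂g₃₃]] = [[g₁₁g₂₁g₃₁][g₁₂g₂₂g₃₂][g₁₃g₂₃g₃₃]]; that is, semicommutative ternary semigroups are medial. -/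
/-- Semicommutative ternary semigroups are medial: if `[abc]` is totally
associative and `[g t h] = [h t g]` for all `g, t, h`, then the ternary product
of the rows of any `3×3` matrix equals the ternary product of the rows of its
transpose. -/
theorem semicommutative_ternary_semigroup_is_medial {G : Type*}
    (m : G → G → G → G)
    (hassoc : ∀ a b c d e : G,
      m (m a b c) d e = m a (m b c d) e ∧ m a (m b c d) e = m a b (m c d e))
    (hsemi : ∀ g t h : G, m g t h = m h t g) :
    ∀ g11 g12 g13 g21 g22 g23 g31 g32 g33 : G,
      m (m g11 g12 g13) (m g21 g22 g23) (m g31 g32 g33) =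
      m (m g11 g21 g31) (m g12 g22 g32) (m g13 g23 g33) := by
  have h1 : ∀ a b c d e : G, m (m a b c) d e = m a (m b c d) e :=
    fun a b c d e => (hassoc a b c d e).1
  have h2 : ∀ a b c d e : G, m a (m b c d) e = m a b (m c d e) :=
    fun a b c d e => (hassoc a b c d e).2
  -- swap positions 2 and 4 in a right-nested product
  have sw : ∀ p q r s t : G, m p q (m r s t) = m p s (m r q t) := by
    intro p q r s t
    calc m p q (m r s t) = m p (m q r s) t := (h2 p q r s t).symm
      _ = m p (m s r q) t := by rw [hsemi q r s]
      _ = m p s (m r q t) := h2 p s r q t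
  -- swap positions 1 and 3 in a right-nested product
  have sw1 : ∀ p q r s t : G, m p q (m r s t) = m r q (m p s t) := by
    intro p q r s t
    calc m p q (m r s t) = m p (m q r s) t := (h2 p q r s t).symm
      _ = m (m p q r) s t := (h1 p q r s t).symm
      _ = m (m r q p) s t := by rw [hsemi p q r]
      _ = m r (m q p s) t := h1 r q p s t
      _ = m r q (m p s t) := h2 r q p s t
  intro a b c d e f g h i
  have L : m (m a b c) (m d e f) (m g h i) = m a b (m c d (m e f (m g h i))) := by
    rw [h1, h2, h2]
  have R : m (m a d g) (m b e h) (m c f i) = m a d (m g b (m e h (m c f i))) := by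
    rw [h1, h2, h2]
  rw [L, R]
  calc m a b (m c d (m e f (m g h i)))
      = m a d (m c b (m e f (m g h i))) := sw a b c d _
    _ = m a d (m c b (m e h (m g f i))) := by rw [sw e f g h i]
    _ = m a d (m e b (m c h (m g f i))) := by rw [sw1 c b e h _]
    _ = m a d (m e b (m g h (m c f i))) := by rw [sw1 c h g f i]
    _ = m a d (m g b (m e h (m c f i))) := by rw [sw1 e b g h _]
end

section
/- Let G be a set with a totally associative ternary operation [·,·,·] and a querelement map g ↦ ḡ satisfying the Dörnte relations, let V be a vector space over a field K, and let Π^L be a left representation of G on V. Then Π^L(ḡ, g) = id_V for all g, and for all g, u ∈ G: Π^L(g,u) ∘ Π^L(ū, ḡ) = Π^L(ū, ḡ) ∘ Π^L(g,u) = id_V; in particular every operator Π^L(g,u) is invertible with inverse Π^L(ū, ḡ), so any left representation gives a representation of the ternary group by a binary group of invertible operators. -/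
/-- Every left representation `Π^L` of a ternary group satisfies
`Π^L(ḡ, g) = id`, and every operator `Π^L(g,u)` is invertible with two-sided
inverse `Π^L(ū, ḡ)`: any left representation gives a representation of the
ternary group by a binary group of invertible operators. -/
theorem left_representation_invertible {G : Type*} (K : Type*) [Field K]
    (V : Type*) [AddCommGroup V] [Module K V]
    (m : G → G → G → G) (bar : G → G)
    (hassoc : ∀ a b c d e : G,
      m (m a b c) d e = m a (m b c d) e ∧ m a (m b c d) e = m a b (m c d e))
    (hdorn : ∀ u g : G,
      m u g (bar g) = u ∧ m u (bar g) g = u ∧ m g (bar g) u = u ∧ m (bar g) g u = u)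
    (PiL : G → G → Module.End K V)
    (hrep : ∀ g1 g2 g3 g4 : G, PiL g1 g2 * PiL g3 g4 = PiL (m g1 g2 g3) g4)
    (hunit : ∀ g : G, PiL g (bar g) = 1) :
    (∀ g : G, PiL (bar g) g = 1) ∧
    (∀ g u : G,
      PiL g u * PiL (bar u) (bar g) = 1 ∧
      PiL (bar u) (bar g) * PiL g u = 1 ∧
      IsUnit (PiL g u)) := by
  have hbar : ∀ g : G, PiL (bar g) g = 1 := by
    intro g
    have h1 : PiL (bar g) g * PiL g (bar g) = PiL (m (bar g) g g) (bar g) := hrep _ _ _ _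
    have h2 : m (bar g) g g = g := (hdorn g g).2.2.2
    calc PiL (bar g) g = PiL (bar g) g * PiL g (bar g) := by rw [hunit, mul_one]
      _ = PiL (m (bar g) g g) (bar g) := h1
      _ = PiL g (bar g) := by rw [h2]
      _ = 1 := hunit g
  refine ⟨hbar, fun g u => ?_⟩
  have hL : PiL g u * PiL (bar u) (bar g) = 1 := by
    rw [hrep, (hdorn g u).1, hunit]
  have hR : PiL (bar u) (bar g) * PiL g u = 1 := by
    rw [hrep, (hdorn (bar u) g).2.1, hbar]
  exact ⟨hL, hR, ⟨⟨PiL g u, PiL (bar u) (bar g), hL, hR⟩, rfl⟩⟩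
end

section
/- Let G be a set with a totally associative and commutative ternary operation [·,·,·] (invariant under all permutations of its three arguments) and a querelement map g ↦ ḡ satisfying the Dörnte relations, and let Π^L be a left representation of G on a K-vector space V. Then Π^L is symmetric: Π^L(g, h) = Π^L(h, g) for all g, h ∈ G. -/
/-- If the ternary group operation is commutative (invariant under all
permutations of its three arguments), then any left representation is
symmetric: `Π^L(g,h) = Π^L(h,g)`. -/
theorem left_representation_symmetric_of_commutative {G : Type*} (K : Type*)
    [Field K] (V : Type*) [AddCommGroup V] [Module K V]
    (m : G → G → G → G) (bar : G → G)
    (hassoc : ∀ a b c d e : G,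
      m (m a b c) d e = m a (m b c d) e ∧ m a (m b c d) e = m a b (m c d e))
    (hcomm12 : ∀ a b c : G, m a b c = m b a c)
    (hcomm23 : ∀ a b c : G, m a b c = m a c b)
    (hdorn : ∀ u g : G,
      m u g (bar g) = u ∧ m u (bar g) g = u ∧ m g (bar g) u = u ∧ m (bar g) g u = u)
    (PiL : G → G → Module.End K V)
    (hrep : ∀ g1 g2 g3 g4 : G, PiL g1 g2 * PiL g3 g4 = PiL (m g1 g2 g3) g4)
    (hunit : ∀ g : G, PiL g (bar g) = 1) :
    ∀ g h : G, PiL g h = PiL h g := by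
  intro g h
  have h1 : PiL g h = PiL (m g h g) (bar g) := by
    rw [← hrep g h g (bar g), hunit, mul_one]
  have h2 : PiL h g = PiL (m h g g) (bar g) := by
    rw [← hrep h g g (bar g), hunit, mul_one]
  rw [h1, h2, hcomm12]
end

section
/- Let G be a set with a totally associative and commutative ternary operation [·,·,·] and a querelement map g ↦ ḡ satisfying the Dörnte relations, and let Π^L be a left representation of G on a K-vector space V. Then Π^L is a middle representation: for all g₁,…,g₆ ∈ G, Π^L(g₁,g₂) ∘ Π^L(g₃,g₄) ∘ Π^L(g₅,g₆) = Π^L([g₁g₃g₅], [g₆g₄g₂]), and Π^L(g,h) ∘ Π^L(ḡ,h̄) = Π^L(ḡ,h̄) ∘ Π^L(g,h) = id_V for all g,h ∈ G. Thus every left representation of a commutative ternary group is a middle representation. -/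
/-- Every left representation of a commutative ternary group is a middle
representation: `Π^L(g₁,g₂) ∘ Π^L(g₃,g₄) ∘ Π^L(g₅,g₆) = Π^L([g₁g₃g₅],[g₆g₄g₂])`
and `Π^L(g,h) ∘ Π^L(ḡ,h̄) = Π^L(ḡ,h̄) ∘ Π^L(g,h) = id`. -/
theorem left_representation_is_middle_of_commutative {G : Type*} (K : Type*)
    [Field K] (V : Type*) [AddCommGroup V] [Module K V]
    (m : G → G → G → G) (bar : G → G)
    (hassoc : ∀ a b c d e : G,
      m (m a b c) d e = m a (m b c d) e ∧ m a (m b c d) e = m a b (m c d e))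
    (hcomm12 : ∀ a b c : G, m a b c = m b a c)
    (hcomm23 : ∀ a b c : G, m a b c = m a c b)
    (hdorn : ∀ u g : G,
      m u g (bar g) = u ∧ m u (bar g) g = u ∧ m g (bar g) u = u ∧ m (bar g) g u = u)
    (PiL : G → G → Module.End K V)
    (hrep : ∀ g1 g2 g3 g4 : G, PiL g1 g2 * PiL g3 g4 = PiL (m g1 g2 g3) g4)
    (hunit : ∀ g : G, PiL g (bar g) = 1) :
    (∀ g1 g2 g3 g4 g5 g6 : G,
      PiL g1 g2 * PiL g3 g4 * PiL g5 g6 = PiL (m g1 g3 g5) (m g6 g4 g2)) ∧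
    (∀ g h : G,
      PiL g h * PiL (bar g) (bar h) = 1 ∧ PiL (bar g) (bar h) * PiL g h = 1) := by
  have assoc1 : ∀ a b c d e : G, m (m a b c) d e = m a (m b c d) e :=
    fun a b c d e => (hassoc a b c d e).1
  have assoc2 : ∀ a b c d e : G, m a (m b c d) e = m a b (m c d e) :=
    fun a b c d e => (hassoc a b c d e).2
  have swap13 : ∀ a b c : G, m a b c = m c b a := by
    intro a b c; rw [hcomm12, hcomm23, hcomm12]
  have key : ∀ a b c : G, PiL a b = PiL (m a b c) (bar c) := by
    intro a b c; rw [← hrep, hunit, mul_one]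
  constructor
  · intro g1 g2 g3 g4 g5 g6
    rw [hrep, hrep, key (m (m g1 g2 g3) g4 g5) g6 g1,
      key (m g1 g3 g5) (m g6 g4 g2) g1]
    congr 1
    have inner : m g2 g3 (m g4 g5 g6) = m g3 g5 (m g6 g4 g2) := by
      calc m g2 g3 (m g4 g5 g6) = m g3 g2 (m g4 g5 g6) := hcomm12 _ _ _
        _ = m g3 (m g2 g4 g5) g6 := (assoc2 g3 g2 g4 g5 g6).symm
        _ = m g3 (m g5 g4 g2) g6 := by rw [swap13 g2 g4 g5]
        _ = m g3 g5 (m g4 g2 g6) := assoc2 g3 g5 g4 g2 g6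
        _ = m g3 g5 (m g6 g4 g2) := by rw [hcomm23 g4 g2 g6, hcomm12 g4 g6 g2]
    calc m (m (m g1 g2 g3) g4 g5) g6 g1
        = m (m g1 g2 g3) (m g4 g5 g6) g1 := assoc1 _ g4 g5 g6 g1
      _ = m g1 (m g2 g3 (m g4 g5 g6)) g1 := assoc1 g1 g2 g3 _ g1
      _ = m g1 (m g3 g5 (m g6 g4 g2)) g1 := by rw [inner]
      _ = m (m g1 g3 g5) (m g6 g4 g2) g1 := (assoc1 g1 g3 g5 _ g1).symm
  · intro g h
    have h1 : m g h (bar g) = h := by rw [hcomm23]; exact (hdorn h g).2.2.1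
    have h2 : m (bar g) (bar h) g = bar h := by
      rw [hcomm23]; exact (hdorn (bar h) g).2.2.2
    constructor
    · rw [hrep, h1, hunit]
    · rw [hrep, h2, key (bar h) h h]
      rw [(hdorn h h).2.2.2, hunit]
end

section
/- Let (G, ·) be a group with identity e, and regard G as the derived ternary group with ternary product [ghu] = g·h·u, whose querelement map is ḡ = g⁻¹. Let V be a K-vector space. (i) If π : G → End_K(V) satisfies π(g·h) = π(g) ∘ π(h) and π(e) = id_V, then Π^L(g,h) := π(g) ∘ π(h) is a left representation of the derived ternary group: Π^L(g₁,g₂) ∘ Π^L(g₃,g₄) = Π^L(g₁·g₂·g₃, g₄) and Π^L(g, g⁻¹) = id_V. (ii) Conversely, if Π^L is any left representation of the derived ternary group, then π(g) := Π^L(g, e) satisfies π(g·h) = π(g) ∘ π(h), π(e) = id_V, and Π^L(g,h) = π(g) ∘ π(h) for all g, h ∈ G. Thus there is a one-to-one correspondence between representations of (G,·) and left representations of der(G,·). -/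
/-- One-to-one correspondence between representations of a binary group
`(G,·)` and left representations of the derived ternary group `der(G,·)` with
`[ghu] = g·h·u` and `ḡ = g⁻¹`:
(i) if `π` is a representation of `(G,·)` then `Π^L(g,h) := π(g) ∘ π(h)` is a
left representation of `der(G,·)`;
(ii) conversely, if `Π^L` is a left representation of `der(G,·)` then
`π(g) := Π^L(g,e)` is a representation of `(G,·)` and
`Π^L(g,h) = π(g) ∘ π(h)`. -/
theorem derived_ternary_left_representation_correspondence
    {G : Type*} [Group G] (K : Type*) [Field K]
    (V : Type*) [AddCommGroup V] [Module K V] :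
    (∀ π : G → Module.End K V,
      (∀ g h : G, π (g * h) = π g * π h) → π 1 = 1 →
        (∀ g1 g2 g3 g4 : G,
          (π g1 * π g2) * (π g3 * π g4) = (π (g1 * g2 * g3)) * π g4) ∧
        (∀ g : G, π g * π g⁻¹ = 1)) ∧
    (∀ PiL : G → G → Module.End K V,
      (∀ g1 g2 g3 g4 : G, PiL g1 g2 * PiL g3 g4 = PiL (g1 * g2 * g3) g4) →
      (∀ g : G, PiL g g⁻¹ = 1) →
        (∀ g h : G, PiL (g * h) 1 = PiL g 1 * PiL h 1) ∧
        PiL 1 1 = 1 ∧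
        (∀ g h : G, PiL g h = PiL g 1 * PiL h 1)) := by
  constructor
  · intro π hmul hone
    constructor
    · intro g1 g2 g3 g4
      rw [hmul (g1 * g2) g3, hmul g1 g2]; noncomm_ring
    · intro g
      rw [← hmul, mul_inv_cancel, hone]
  · intro PiL hcomp hquer
    have hone : PiL 1 1 = 1 := by
      have := hquer (1 : G); simpa using this
    have key : ∀ g h : G, PiL g h = PiL (g * h) 1 := by
      intro g h
      have := hcomp g h 1 1
      rw [hone, mul_one, mul_one] at this
      exact this
    have hrep : ∀ g h : G, PiL (g * h) 1 = PiL g 1 * PiL h 1 := by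
      intro g h
      have := hcomp g 1 h 1
      rw [mul_one] at this
      exact this.symm
    exact ⟨hrep, hone, fun g h => (key g h).trans (hrep g h)⟩
end

section
/- Let G be a set with a totally associative ternary operation [·,·,·] and a querelement map g ↦ ḡ satisfying the Dörnte relations, let V be a finite-dimensional vector space over a field K, and let Π^M be a middle representation of G on V. If a = [g a′ ḡ] and b = [h b′ h̄] for some g, h ∈ G (i.e. (a,b) is conjugate-equivalent to (a′,b′)), then the traces agree: tr Π^M(a, b) = tr Π^M(a′, b′). -/
/-- For a middle representation `Π^M` of a ternary group on a
finite-dimensional vector space, conjugate-equivalent pairs have equal traces: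
if `a = [g a′ ḡ]` and `b = [h b′ h̄]` then
`tr Π^M(a,b) = tr Π^M(a′,b′)`. -/
theorem middle_representation_trace_invariant {G : Type*} (K : Type*)
    [Field K] (V : Type*) [AddCommGroup V] [Module K V] [FiniteDimensional K V]
    (m : G → G → G → G) (bar : G → G)
    (hassoc : ∀ a b c d e : G,
      m (m a b c) d e = m a (m b c d) e ∧ m a (m b c d) e = m a b (m c d e))
    (hdorn : ∀ u g : G,
      m u g (bar g) = u ∧ m u (bar g) g = u ∧ m g (bar g) u = u ∧ m (bar g) g u = u)
    (PiM : G → G → Module.End K V)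
    (hrep : ∀ g3 h3 g2 h2 g1 h1 : G,
      PiM g3 h3 * PiM g2 h2 * PiM g1 h1 = PiM (m g3 g2 g1) (m h1 h2 h3))
    (hinv : ∀ g h : G,
      PiM g h * PiM (bar g) (bar h) = 1 ∧ PiM (bar g) (bar h) * PiM g h = 1) :
    ∀ a b a' b' g h : G, a = m g a' (bar g) → b = m h b' (bar h) →
      LinearMap.trace K V (PiM a b) = LinearMap.trace K V (PiM a' b') := by
  intro a b a' b' g h ha hb
  -- key: PiM (bar g) h * PiM g (bar h) = 1
  have key : PiM (bar g) h * PiM g (bar h) = 1 := by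
    have h1 : PiM (bar g) h * PiM g (bar h) * PiM g h
        = PiM (m (bar g) g g) (m h (bar h) h) := hrep _ _ _ _ _ _
    rw [(hdorn g g).2.2.2, (hdorn h h).2.1] at h1
    calc PiM (bar g) h * PiM g (bar h)
        = PiM (bar g) h * PiM g (bar h) * (PiM g h * PiM (bar g) (bar h)) := by
          rw [(hinv g h).1, mul_one]
      _ = (PiM (bar g) h * PiM g (bar h) * PiM g h) * PiM (bar g) (bar h) := by
          noncomm_ring
      _ = 1 := by rw [h1, (hinv g h).1]
  have hab : PiM a b = PiM g (bar h) * PiM a' b' * PiM (bar g) h := by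
    rw [ha, hb, hrep]
  rw [hab, LinearMap.trace_mul_comm, ← mul_assoc, key, one_mul]
end

section
/- Let G be a set with a totally associative ternary operation [·,·,·] and a querelement map g ↦ ḡ satisfying the Dörnte relations, fix a ∈ G, and let ρ : G → End_K(V) be a representation of the binary retract ret_a(G,[ ]) (whose multiplication is g ∗ h = [g a h] and whose identity is ā), i.e. ρ([g a h]) = ρ(g) ∘ ρ(h) for all g, h ∈ G and ρ(ā) = id_V. Then Π^L(g, h) := ρ(g) ∘ ρ([ā h ā]) is a left representation of the ternary group G: Π^L(g₁,g₂) ∘ Π^L(g₃,g₄) = Π^L([g₁g₂g₃], g₄) for all g₁,…,g₄ ∈ G and Π^L(g, ḡ) = id_V for all g ∈ G. (This gives the correspondence between binary representations of the retract and left representations of the ternary group.) -/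
/-- From a binary representation `ρ` of the retract `ret_a(G,[ ])` (with
multiplication `g ∗ h = [g a h]` and identity `ā`) one obtains a left
representation of the ternary group by `Π^L(g,h) := ρ(g) ∘ ρ([ā h ā])`. -/
theorem retract_representation_gives_left_representation {G : Type*}
    (K : Type*) [Field K] (V : Type*) [AddCommGroup V] [Module K V]
    (m : G → G → G → G) (bar : G → G)
    (hassoc : ∀ a b c d e : G,
      m (m a b c) d e = m a (m b c d) e ∧ m a (m b c d) e = m a b (m c d e))
    (hdorn : ∀ u g : G,
      m u g (bar g) = u ∧ m u (bar g) g = u ∧ m g (bar g) u = u ∧ m (bar g) g u = u)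
    (a : G) (ρ : G → Module.End K V)
    (hρ : ∀ g h : G, ρ (m g a h) = ρ g * ρ h)
    (hρ1 : ρ (bar a) = 1) :
    (∀ g1 g2 g3 g4 : G,
      (ρ g1 * ρ (m (bar a) g2 (bar a))) * (ρ g3 * ρ (m (bar a) g4 (bar a))) =
        ρ (m g1 g2 g3) * ρ (m (bar a) g4 (bar a))) ∧
    (∀ g : G, ρ g * ρ (m (bar a) (bar g) (bar a)) = 1) := by
  have key : ∀ g1 g2 g3 : G,
      ρ g1 * ρ (m (bar a) g2 (bar a)) * ρ g3 = ρ (m g1 g2 g3) := by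
    intro g1 g2 g3
    have h1 : ρ (m (bar a) g2 (bar a)) * ρ g3 = ρ (m (bar a) g2 g3) := by
      rw [← hρ]
      congr 1
      rw [(hassoc (bar a) g2 (bar a) a g3).1, (hassoc (bar a) g2 (bar a) a g3).2,
        (hdorn g3 a).2.2.2]
    rw [mul_assoc, h1, ← hρ]
    congr 1
    have := hassoc g1 a (bar a) g2 g3
    rw [← this.2, ← this.1, (hdorn g1 a).1]
  constructor
  · intro g1 g2 g3 g4
    rw [← mul_assoc, key]
  · intro g
    have h1 : ρ g * ρ (m (bar a) (bar g) (bar a)) = ρ (m g a (m (bar a) (bar g) (bar a))) :=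
      (hρ _ _).symm
    rw [h1]
    have h2 := hassoc g a (bar a) (bar g) (bar a)
    rw [← h2.2, ← h2.1, (hdorn g a).1, (hdorn (bar a) g).2.2.1, hρ1]
end
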